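/- Let R be a commutative ring and M an R-module with Z(M) ⊆ Z(R) and Z(R) ⊆ Jac(R). If R is a Prüfer ring and M_m = r·M_m for every maximal ideal m of R and every regular element r of R, then the trivial extension R ⋉ M is a Prüfer ring. -/

import Mathlib

open Pointwise

/-- The set of zero-divisors of a commutative ring `A`. -/
def zdivSet (A : Type*) [CommRing A] : Set A := {a | ∃ b, b ≠ 0 ∧ a * b = 0}

/-- `Z(M)`: the set of elements of `R` that kill some nonzero element of `M`. -/
def zdivModSet (R M : Type*) [CommRing R] [AddCommGroup M] [Module R M] : Set R :=
  {r | ∃ m : M, m ≠ 0 ∧ r • m = 0}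

/-- A commutative ring is a Prüfer ring if every nonzero finitely generated regular ideal
is projective (equivalently, invertible). -/
def IsPruferRing (A : Type*) [CommRing A] : Prop :=
  ∀ I : Ideal A, I ≠ ⊥ → I.FG → (∃ r ∈ I, r ∈ nonZeroDivisors A) → Module.Projective A I

theorem stmt12 {R M : Type*} [CommRing R] [AddCommGroup M] [Module R M]
    [Module Rᵐᵒᵖ M] [IsCentralScalar R M]
    (hZM : zdivModSet R M ⊆ zdivSet R)
    (hZJ : zdivSet R ⊆ (Ideal.jacobson (⊥ : Ideal R) : Set R))
    (hR : IsPruferRing R)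
    (hloc : ∀ (m : Ideal R) [m.IsMaximal], ∀ r ∈ nonZeroDivisors R,
      r • (⊤ : Submodule R (LocalizedModule m.primeCompl M)) = ⊤) :
    IsPruferRing (TrivSqZeroExt R M) := by
  classical
  clear hZM hZJ
  intro J hJ0 hJfg hJreg
  obtain ⟨ρ, hρJ, hρ⟩ := hJreg
  set r : R := ρ.fst with hrdef
  -- basic multiplication fact
  have hinrmul : ∀ m : M, TrivSqZeroExt.inr m * ρ = TrivSqZeroExt.inr (r • m) := by
    intro m
    ext
    · simp
    · simp [op_smul_eq_smul]; rfl
  -- `r` acts injectively on `M`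
  have hinj : ∀ m : M, r • m = 0 → m = 0 := by
    intro m hm
    have h0 : TrivSqZeroExt.inr m * ρ = 0 := by
      rw [hinrmul, hm, TrivSqZeroExt.inr_zero]
    have h1 := (mul_right_mem_nonZeroDivisors_eq_zero_iff hρ).mp h0
    have h2 : TrivSqZeroExt.inr m = (TrivSqZeroExt.inr 0 : TrivSqZeroExt R M) := by
      rw [TrivSqZeroExt.inr_zero]; exact h1
    exact TrivSqZeroExt.inr_injective h2
  have hcancel : ∀ m m' : M, r • m = r • m' → m = m' := by
    intro m m' h
    have h1 : r • (m - m') = 0 := by rw [smul_sub, h, sub_self]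
    exact sub_eq_zero.mp (hinj _ h1)
  -- `r` is a nonzerodivisor of `R`
  have hrreg : r ∈ nonZeroDivisors R := by
    rw [mem_nonZeroDivisors_iff_right]
    intro b hb
    have hbm : b • ρ.snd = 0 := by
      apply hinj
      rw [smul_smul, mul_comm, hb, zero_smul]
    have h0 : TrivSqZeroExt.inl b * ρ = 0 := by
      ext
      · simpa using hb
      · simpa [op_smul_eq_smul] using hbm
    have := (mul_right_mem_nonZeroDivisors_eq_zero_iff hρ).mp h0
    simpa using congrArg TrivSqZeroExt.fst this
  -- `r` acts surjectively on `M`, by the local hypothesis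
  have hsurj : ∀ m : M, ∃ m' : M, r • m' = m := by
    have h : LinearMap.range (LinearMap.lsmul R M r) = ⊤ := by
      apply Submodule.eq_top_of_localization₀_maximal
        (fun P _ => LocalizedModule P.primeCompl M)
        (fun P _ => LocalizedModule.mkLinearMap P.primeCompl M)
      intro P hP
      rw [eq_top_iff]
      intro x _
      have hx : x ∈ r • (⊤ : Submodule R (LocalizedModule P.primeCompl M)) := by
        rw [hloc P r hrreg]; trivial
      rw [← SetLike.mem_coe, Submodule.coe_pointwise_smul] at hx
      obtain ⟨y, -, rfl⟩ := hx
      obtain ⟨⟨m, s⟩, rfl⟩ :=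
        IsLocalizedModule.mk'_surjective P.primeCompl
          (LocalizedModule.mkLinearMap P.primeCompl M) y
      refine ⟨r • m, ⟨m, rfl⟩, s, ?_⟩
      simp only [Function.uncurry_apply_pair]
      rw [IsLocalizedModule.mk'_smul]
    intro m
    have : m ∈ LinearMap.range (LinearMap.lsmul R M r) := h ▸ trivial
    exact this
  -- the linear equivalence `m ↦ r • m` and its inverse `σ`
  have hbij : Function.Bijective (LinearMap.lsmul R M r) := by
    constructor
    · intro a b hab
      exact hcancel a b hab
    · intro m
      obtain ⟨m', hm'⟩ := hsurj m
      exact ⟨m', hm'⟩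
  set e : M ≃ₗ[R] M := LinearEquiv.ofBijective _ hbij with he
  set σ : M →ₗ[R] M := (e.symm : M →ₗ[R] M) with hσdef
  have hσ : ∀ m : M, r • σ m = m := by
    intro m
    have h1 : e (σ m) = m := e.apply_symm_apply m
    rwa [he, LinearEquiv.ofBijective_apply, LinearMap.lsmul_apply] at h1
  -- every `inr m` lies in `J`
  have hMJ : ∀ m : M, TrivSqZeroExt.inr m ∈ J := by
    intro m
    obtain ⟨m', rfl⟩ := hsurj m
    rw [← hinrmul]
    exact J.mul_mem_left _ hρJ
  -- the projected ideal
  set I₀ : Ideal R := J.map (TrivSqZeroExt.fstHom R R M) with hI₀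
  have hfstsurj : Function.Surjective (TrivSqZeroExt.fstHom R R M) := by
    intro x
    exact ⟨TrivSqZeroExt.inl x, TrivSqZeroExt.fst_inl M x⟩
  have hmemI : ∀ x : R, x ∈ I₀ ↔ ∃ a ∈ J, TrivSqZeroExt.fst a = x := by
    intro x
    exact Ideal.mem_map_iff_of_surjective _ hfstsurj
  have hXJ : ∀ x ∈ I₀, TrivSqZeroExt.inl x ∈ J := by
    intro x hx
    obtain ⟨a, haJ, rfl⟩ := (hmemI x).mp hx
    have h1 : TrivSqZeroExt.inl (TrivSqZeroExt.fst a) = a - TrivSqZeroExt.inr a.snd := by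
      ext <;> simp
    rw [h1]
    exact sub_mem haJ (hMJ _)
  have hrI : r ∈ I₀ := Ideal.mem_map_of_mem _ hρJ
  have hr0 : r ≠ 0 := by
    intro h
    have h1 : (1 : R) = 0 := (mul_right_mem_nonZeroDivisors_eq_zero_iff hrreg).mp (by rw [h, mul_zero])
    have hsR : Subsingleton R := subsingleton_of_zero_eq_one h1.symm
    have hsM : Subsingleton M := Module.subsingleton R M
    have hsA : Subsingleton (TrivSqZeroExt R M) :=
      ⟨fun a b => TrivSqZeroExt.ext (Subsingleton.elim _ _) (Subsingleton.elim _ _)⟩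
    exact hJ0 (Subsingleton.elim _ _)
  have hne : I₀ ≠ ⊥ := by
    intro h
    rw [h] at hrI
    exact hr0 (Ideal.mem_bot.mp hrI)
  have hproj : Module.Projective R I₀ := hR I₀ hne (Ideal.FG.map hJfg _) ⟨r, hrI, hrreg⟩
  obtain ⟨s, hs⟩ := (Module.projective_def).mp hproj
  set rI : I₀ := ⟨r, hrI⟩ with hrIdef
  set T : Finset I₀ := (s rI).support with hT
  set c : I₀ → R := fun t => s rI t with hc
  -- the key commutation relation
  have hkey : ∀ (x : I₀) (t : I₀), r * (s x) t = (x : R) * c t := by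
    intro x t
    have h1 : r • x = (x : R) • rI := by
      apply Subtype.ext
      simp [hrIdef, mul_comm]
    calc r * (s x) t = (r • s x) t := by rw [Finsupp.smul_apply, smul_eq_mul]
      _ = (s (r • x)) t := by rw [map_smul]
      _ = (s ((x : R) • rI)) t := by rw [h1]
      _ = ((x : R) • s rI) t := by rw [map_smul]
      _ = (x : R) * c t := by rw [Finsupp.smul_apply, smul_eq_mul]
  have hsum_c : ∑ t ∈ T, c t * (t : R) = r := by
    have h1 := hs rI
    have h2 := congrArg (Subtype.val) h1
    rw [Finsupp.linearCombination_apply, Finsupp.sum] at h2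
    have h3 : ((∑ a ∈ (s rI).support, (s rI) a • id a : I₀) : R) = r := h2
    rw [← h3]
    push_cast
    exact Finset.sum_congr rfl fun t _ => by simp [smul_eq_mul]; rfl
  have hdual : ∀ x : I₀, ∑ t ∈ T, (s x) t * (t : R) = (x : R) := by
    intro x
    have h1 : r * (∑ t ∈ T, (s x) t * (t : R)) = (x : R) * r := by
      rw [Finset.mul_sum]
      calc ∑ t ∈ T, r * ((s x) t * (t : R))
          = ∑ t ∈ T, ((x : R) * (c t * (t : R))) := by
            refine Finset.sum_congr rfl fun t _ => ?_
            rw [← mul_assoc, hkey, mul_assoc]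
        _ = (x : R) * r := by rw [← Finset.mul_sum, hsum_c]
    have h2 : (∑ t ∈ T, (s x) t * (t : R)) * r = (x : R) * r := by
      rw [mul_comm _ r]; exact h1
    exact (mul_cancel_right_mem_nonZeroDivisors hrreg).mp h2
  -- the "division by r" maps on M
  set g : I₀ → M → M := fun t m => σ (c t • m) with hg
  have hg_r : ∀ t m, r • g t m = c t • m := fun t m => hσ _
  have hgadd : ∀ (t : I₀) (m n : M), g t (m + n) = g t m + g t n := by
    intro t m n
    simp only [hg]
    rw [smul_add, map_add]
  have hgsmul : ∀ (t : I₀) (a : R) (m : M), g t (a • m) = a • g t m := by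
    intro t a m
    simp only [hg]
    rw [smul_comm, map_smul]
  have hg_mul : ∀ (t : I₀) (x : R) (hx : x ∈ I₀) (n : M),
      g t (x • n) = (s ⟨x, hx⟩) t • n := by
    intro t x hx n
    apply hcancel
    rw [hg_r, smul_smul, smul_smul, mul_comm (c t), hkey ⟨x, hx⟩ t]
  -- data for the dual basis of J
  have hfstI : ∀ p : J, (p : TrivSqZeroExt R M).fst ∈ I₀ := fun p =>
    Ideal.mem_map_of_mem _ p.2
  set E : I₀ → J → R := fun t p => (s ⟨(p : TrivSqZeroExt R M).fst, hfstI p⟩) t with hE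
  set G : I₀ → J → M := fun t p => g t ((p : TrivSqZeroExt R M).snd) with hG
  set F : I₀ → J → TrivSqZeroExt R M := fun t p =>
    TrivSqZeroExt.inl (E t p) + TrivSqZeroExt.inr (G t p) with hF
  set X : I₀ → J := fun t => ⟨TrivSqZeroExt.inl (t : R), hXJ _ t.2⟩ with hX
  have hEadd : ∀ (t : I₀) (p q : J), E t (p + q) = E t p + E t q := by
    intro t p q
    have h1 : (⟨((p + q : J) : TrivSqZeroExt R M).fst, hfstI _⟩ : I₀) =
        ⟨(p : TrivSqZeroExt R M).fst, hfstI p⟩ + ⟨(q : TrivSqZeroExt R M).fst, hfstI q⟩ := by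
      apply Subtype.ext; simp
    simp only [hE]
    rw [h1, map_add, Finsupp.add_apply]
  have hGadd : ∀ (t : I₀) (p q : J), G t (p + q) = G t p + G t q := by
    intro t p q
    simp only [hG]
    rw [show ((p + q : J) : TrivSqZeroExt R M)
      = (p : TrivSqZeroExt R M) + (q : TrivSqZeroExt R M) from rfl,
      TrivSqZeroExt.snd_add, hgadd]
  have hFadd : ∀ (t : I₀) (p q : J), F t (p + q) = F t p + F t q := by
    intro t p q
    simp only [hF, hEadd, hGadd, TrivSqZeroExt.inl_add, TrivSqZeroExt.inr_add]
    abel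
  have hFsmul : ∀ (t : I₀) (a : TrivSqZeroExt R M) (p : J), F t (a • p) = a * F t p := by
    intro t a p
    have hval : ((a • p : J) : TrivSqZeroExt R M) = a * (p : TrivSqZeroExt R M) := rfl
    have h1 : (⟨((a • p : J) : TrivSqZeroExt R M).fst, hfstI _⟩ : I₀) =
        a.fst • ⟨(p : TrivSqZeroExt R M).fst, hfstI p⟩ := by
      apply Subtype.ext; simp [hval, smul_eq_mul]
    have hEs : E t (a • p) = a.fst * E t p := by
      simp only [hE]
      rw [h1, map_smul, Finsupp.smul_apply, smul_eq_mul]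
    have hGs : G t (a • p) = a.fst • G t p + E t p • a.snd := by
      simp only [hG, hE]
      rw [hval, TrivSqZeroExt.snd_mul, op_smul_eq_smul, hgadd, hgsmul,
        hg_mul t _ (hfstI p) a.snd]
    ext
    · simp [hF, hEs]
    · simp [hF, hGs, op_smul_eq_smul]
  set S : J →ₗ[TrivSqZeroExt R M] (J →₀ TrivSqZeroExt R M) :=
    { toFun := fun p => ∑ t ∈ T, Finsupp.single (X t) (F t p)
      map_add' := by
        intro p q
        rw [← Finset.sum_add_distrib]
        exact Finset.sum_congr rfl fun t _ => by rw [hFadd, Finsupp.single_add]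
      map_smul' := by
        intro a p
        simp only [RingHom.id_apply]
        rw [Finset.smul_sum]
        exact Finset.sum_congr rfl fun t _ => by
          rw [hFsmul, Finsupp.smul_single, smul_eq_mul] } with hS
  refine (Module.projective_def).mpr ⟨S, ?_⟩
  intro p
  have hSp : Finsupp.linearCombination _ id (S p) = ∑ t ∈ T, F t p • X t := by
    simp only [hS, LinearMap.coe_mk, AddHom.coe_mk, map_sum]
    exact Finset.sum_congr rfl fun t _ => by
      rw [Finsupp.linearCombination_single, id]
  rw [hSp]
  apply Subtype.ext
  push_cast
  simp only [smul_eq_mul]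
  ext
  · rw [TrivSqZeroExt.fst_sum]
    have h1 : ∀ t : I₀, (F t p * TrivSqZeroExt.inl (t : R)).fst = (E t p) * (t : R) := by
      intro t; simp [hF]
    rw [Finset.sum_congr rfl fun t _ => h1 t]
    exact hdual ⟨(p : TrivSqZeroExt R M).fst, hfstI p⟩
  · rw [TrivSqZeroExt.snd_sum]
    have h1 : ∀ t : I₀, (F t p * TrivSqZeroExt.inl (t : R)).snd = (t : R) • G t p := by
      intro t; simp [hF, op_smul_eq_smul]
    rw [Finset.sum_congr rfl fun t _ => h1 t]
    apply hcancel
    rw [Finset.smul_sum]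
    have h2 : ∀ t : I₀, r • ((t : R) • G t p)
        = ((c t) * (t : R)) • (p : TrivSqZeroExt R M).snd := by
      intro t
      simp only [hG]
      rw [smul_comm, hg_r, smul_smul, mul_comm]
    rw [Finset.sum_congr rfl fun t _ => h2 t, ← Finset.sum_smul, hsum_c]
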